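/- Let Γ and G be finite nilpotent groups of order n and let β : Γ → Hol(G) be a homomorphism with component matrix β_{pq} = π_q ∘ β ∘ ι_p : Γ_p → Hol(G_q). Then β is a regular embedding if and only if each diagonal component β_{pp} : Γ_p → Hol(G_p) is a regular embedding. -/

import Mathlib

/-- The holomorph of a group `G`: the subgroup of `Perm G` generated by the right regular
representation `ρ(g) : x ↦ x * g⁻¹` together with the automorphisms of `G`. -/
def Hol (G : Type*) [Group G] : Subgroup (Equiv.Perm G) :=
  Subgroup.closure
    ((Set.range fun g : G => Equiv.mulRight g⁻¹) ∪
      (Set.range fun f : MulAut G => (f : G ≃* G).toEquiv))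

open MulAction in
/-- A normal subgroup of coprime order in a transitive group acts trivially. -/
private lemma core_fix {A X : Type*} [Group A] [Finite X] [MulAction A X]
    [MulAction.IsPretransitive A X]
    (N : Subgroup A) [N.Normal]
    (hcop : Nat.Coprime (Nat.card N) (Nat.card X)) :
    ∀ a ∈ N, ∀ x : X, a • x = x := by
  intro a ha x
  have hB : IsBlock A (orbit N x) := IsBlock.orbit_of_normal x
  have h1 : (orbit N x).ncard ∣ Nat.card X :=
    hB.ncard_dvd_card ⟨x, mem_orbit_self x⟩
  have h2 : (orbit N x).ncard ∣ Nat.card N := by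
    rw [← Nat.card_coe_set_eq, Nat.card_congr (orbitEquivQuotientStabilizer N x)]
    exact Subgroup.card_quotient_dvd_card _
  have hone : (orbit N x).ncard = 1 :=
    Nat.dvd_one.mp (hcop ▸ Nat.dvd_gcd h2 h1)
  obtain ⟨z, hz⟩ := Set.ncard_eq_one.mp hone
  have hx : x ∈ orbit N x := mem_orbit_self x
  have hax : a • x ∈ orbit N x := ⟨⟨a, ha⟩, rfl⟩
  rw [hz, Set.mem_singleton_iff] at hx hax
  rw [hax, hx]

/-- Let `Γ = ∏_p Γ_p` and `G = ∏_p G_p` be nilpotent groups of order `n` given by their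
Sylow decompositions, and `β : Γ →* Hol G = ∏_p Hol G_p` a homomorphism with component
matrix `β_{pq} = π_q ∘ β ∘ ι_p`.  Then `β` is a regular embedding (injective with image a
regular group of permutations of `G`) if and only if each diagonal component
`β_{pp} : Γ_p → Hol G_p` is a regular embedding. -/
theorem regular_embedding_iff_diagonal (n : ℕ) (hn : 0 < n)
    (Γ G : n.primeFactors → Type) [∀ p, Group (Γ p)] [∀ p, Group (G p)]
    [∀ p, Finite (Γ p)] [∀ p, Finite (G p)]
    (hΓ : ∀ p : n.primeFactors, Nat.card (Γ p) = (p : ℕ) ^ n.factorization (p : ℕ))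
    (hG : ∀ p : n.primeFactors, Nat.card (G p) = (p : ℕ) ^ n.factorization (p : ℕ))
    (β : (∀ p, Γ p) →* ∀ p, Hol (G p)) :
    (Function.Injective β ∧
      ∀ x y : ∀ p, G p, ∃! t, t ∈ Set.range β ∧
        (fun p => ((t p : Equiv.Perm (G p)) (x p))) = y) ↔
    (∀ p : n.primeFactors,
      Function.Injective (fun γ : Γ p => β (Pi.mulSingle p γ) p) ∧
      ∀ x y : G p, ∃! t : Hol (G p),
        (∃ γ : Γ p, β (Pi.mulSingle p γ) p = t) ∧ (t : Equiv.Perm (G p)) x = y) := by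
  classical
  have hprime : ∀ p : n.primeFactors, (p : ℕ).Prime :=
    fun p => Nat.prime_of_mem_primeFactors p.2
  -- Step 1: if each component action is transitive then off-diagonal components vanish.
  have hvanish : (∀ q : n.primeFactors, ∀ x y : G q,
        ∃ γf : ∀ p, Γ p, ((β γf q : Equiv.Perm (G q))) x = y) →
      ∀ (p q : n.primeFactors), p ≠ q → ∀ γ : Γ p, β (Pi.mulSingle p γ) q = 1 := by
    intro htr p q hpq γ
    set fq : (∀ p, Γ p) →* Equiv.Perm (G q) :=
      ((Hol (G q)).subtype.comp ((Pi.evalMonoidHom (fun p => ↥(Hol (G p))) q).comp β)) with hfq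
    letI : MulAction (∀ p, Γ p) (G q) := MulAction.compHom (G q) fq
    haveI : MulAction.IsPretransitive (∀ p, Γ p) (G q) := by
      constructor
      intro x y
      obtain ⟨γf, hγf⟩ := htr q x y
      exact ⟨γf, hγf⟩
    set N : Subgroup (∀ p, Γ p) := (MonoidHom.mulSingle Γ p).range with hN
    haveI : N.Normal := by
      constructor
      rintro m ⟨γ', rfl⟩ g
      refine ⟨g p * γ' * (g p)⁻¹, ?_⟩
      funext r
      by_cases hr : r = p
      · subst hr; simp
      · simp [Pi.mulSingle_eq_of_ne hr]
    have hcardN : Nat.card N = Nat.card (Γ p) := by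
      rw [hN]
      exact (Nat.card_congr (Equiv.ofInjective _ (Pi.mulSingle_injective (M := Γ) p))).symm
    have hcop : Nat.Coprime (Nat.card N) (Nat.card (G q)) := by
      rw [hcardN, hΓ p, hG q]
      exact Nat.Coprime.pow _ _ ((Nat.coprime_primes (hprime p) (hprime q)).mpr
        (fun h => hpq (Subtype.ext h)))
    have hfix := core_fix N hcop (Pi.mulSingle p γ) ⟨γ, rfl⟩
    have hperm : fq (Pi.mulSingle p γ) = 1 := Equiv.ext fun x => hfix x
    have : (Hol (G q)).subtype (β (Pi.mulSingle p γ) q) = (Hol (G q)).subtype 1 := by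
      simpa [hfq] using hperm
    exact (Hol (G q)).subtype_injective this
  -- Step 2: then β is diagonal.
  have hdiag : (∀ (p q : n.primeFactors), p ≠ q → ∀ γ : Γ p, β (Pi.mulSingle p γ) q = 1) →
      ∀ (γf : ∀ p, Γ p) (q : n.primeFactors), β γf q = β (Pi.mulSingle q (γf q)) q := by
    intro hv γf q
    have hext : (Pi.evalMonoidHom (fun p => ↥(Hol (G p))) q).comp β
        = ((Pi.evalMonoidHom (fun p => ↥(Hol (G p))) q).comp β).comp
            ((MonoidHom.mulSingle Γ q).comp (Pi.evalMonoidHom Γ q)) := by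
      apply MonoidHom.pi_ext
      intro i x
      by_cases hi : i = q
      · subst hi; simp
      · simp only [MonoidHom.coe_comp, Function.comp_apply, Pi.evalMonoidHom_apply,
          MonoidHom.mulSingle_apply]
        rw [Pi.mulSingle_eq_of_ne (Ne.symm hi)]
        simp [hv i q hi x]
    exact DFunLike.congr_fun hext γf
  constructor
  · rintro ⟨hinj, hreg⟩
    have htr : ∀ q : n.primeFactors, ∀ x y : G q,
        ∃ γf : ∀ p, Γ p, ((β γf q : Equiv.Perm (G q))) x = y := by
      intro q x y
      obtain ⟨t, ⟨⟨γf, rfl⟩, hty⟩, -⟩ := hreg (Pi.mulSingle q x) (Pi.mulSingle q y)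
      refine ⟨γf, ?_⟩
      have := congrFun hty q
      simpa using this
    have hv := hvanish htr
    have hd := hdiag hv
    intro q
    constructor
    · intro γ γ' h
      simp only at h
      have hfull : β (Pi.mulSingle q γ) = β (Pi.mulSingle q γ') := by
        funext r
        by_cases hr : q = r
        · subst hr; exact h
        · rw [hv q r hr γ, hv q r hr γ']
      have := congrFun (hinj hfull) q
      simpa using this
    · intro x y
      obtain ⟨t, ⟨⟨γf, rfl⟩, hty⟩, huniq⟩ := hreg (Pi.mulSingle q x) (Pi.mulSingle q y)
      refine ⟨β γf q, ⟨⟨γf q, (hd γf q).symm⟩, by simpa using congrFun hty q⟩, ?_⟩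
      rintro s ⟨⟨γs, rfl⟩, hs⟩
      have hT : β (Pi.mulSingle q γs) ∈ Set.range β ∧
          (fun p => ((β (Pi.mulSingle q γs) p : Equiv.Perm (G p)) (Pi.mulSingle q x p)))
            = Pi.mulSingle q y := by
        refine ⟨⟨_, rfl⟩, ?_⟩
        funext r
        by_cases hr : q = r
        · subst hr; simpa using hs
        · rw [hv q r hr γs]
          simp [Pi.mulSingle_eq_of_ne (Ne.symm hr)]
      have := congrFun (huniq _ hT) q
      exact this
  · intro h
    have htr : ∀ q : n.primeFactors, ∀ x y : G q,
        ∃ γf : ∀ p, Γ p, ((β γf q : Equiv.Perm (G q))) x = y := by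
      intro q x y
      obtain ⟨t, ⟨⟨γ, hγ⟩, hty⟩, -⟩ := (h q).2 x y
      exact ⟨Pi.mulSingle q γ, by rw [hγ]; exact hty⟩
    have hv := hvanish htr
    have hd := hdiag hv
    constructor
    · intro γ γ' hγγ
      funext q
      have h1 : β (Pi.mulSingle q (γ q)) q = β (Pi.mulSingle q (γ' q)) q := by
        rw [← hd γ q, ← hd γ' q, hγγ]
      exact (h q).1 h1
    · intro x y
      have hex : ∀ q : n.primeFactors, ∃ g : Γ q,
          ((β (Pi.mulSingle q g) q : Equiv.Perm (G q))) (x q) = y q := by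
        intro q
        obtain ⟨t, ⟨⟨γ, hγ⟩, hty⟩, -⟩ := (h q).2 (x q) (y q)
        exact ⟨γ, by rw [hγ]; exact hty⟩
      choose g hg using hex
      refine ⟨β g, ⟨⟨g, rfl⟩, ?_⟩, ?_⟩
      · funext r
        rw [hd g r]
        exact hg r
      · rintro t ⟨⟨γt, rfl⟩, ht⟩
        funext r
        obtain ⟨t0, ht0, hu⟩ := (h r).2 (x r) (y r)
        have e1 : β γt r = t0 := hu _ ⟨⟨γt r, (hd γt r).symm⟩, congrFun ht r⟩
        have e2 : β g r = t0 := hu _ ⟨⟨g r, (hd g r).symm⟩, by rw [hd g r]; exact hg r⟩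
        rw [e1, e2]
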